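/- arXiv:2510.18780 — 7 statements merged into one kernel-verified Lean document; each statement's English description precedes it below -/
import Mathlib

section
/- For vectors x_1, …, x_m ∈ ℝ_+^d and p ∈ [1,∞), the absolute value of ‖x_1 ∨ ⋯ ∨ x_m‖_p^p − (‖x_1‖_p^p + ⋯ + ‖x_m‖_p^p) is at most m · max over 1 ≤ i < m of ‖(x_1 ∨ ⋯ ∨ x_i) ∧ (x_{i+1} ∨ ⋯ ∨ x_m)‖_p^p. -/
open scoped BigOperators

private lemma ciSup_fin_succ (n : ℕ) (g : ℕ → ℝ) :
    (⨆ i : Fin (n + 2), g i.1) = max (⨆ i : Fin (n + 1), g i.1) (g (n + 1)) := by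
  apply le_antisymm
  · apply ciSup_le
    intro i
    rcases Nat.lt_or_ge i.1 (n + 1) with h | h
    · exact le_max_of_le_left (le_ciSup (f := fun i : Fin (n + 1) => g i.1)
        (Set.Finite.bddAbove (Set.finite_range _)) ⟨i.1, h⟩)
    · have : i.1 = n + 1 := by omega
      rw [this]; exact le_max_right _ _
  · apply max_le
    · apply ciSup_le
      intro i
      exact le_ciSup (f := fun i : Fin (n + 2) => g i.1)
        (Set.Finite.bddAbove (Set.finite_range _)) (⟨i.1, by omega⟩ : Fin (n + 2))
    · exact le_ciSup (f := fun i : Fin (n + 2) => g i.1)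
        (Set.Finite.bddAbove (Set.finite_range _)) (⟨n + 1, by omega⟩ : Fin (n + 2))

private lemma rpow_max_min (a b p : ℝ) :
    a ^ p + b ^ p = max a b ^ p + min a b ^ p := by
  rcases le_total a b with h | h
  · rw [max_eq_right h, min_eq_left h, add_comm]
  · rw [max_eq_left h, min_eq_right h]

private lemma tele (p : ℝ) (f L : ℕ → ℝ) (hL0 : L 0 = f 0)
    (hLs : ∀ k, L (k + 1) = max (L k) (f (k + 1))) :
    ∀ n, ∑ i ∈ Finset.range (n + 1), f i ^ p
        = L n ^ p + ∑ l ∈ Finset.range n, (min (L l) (f (l + 1))) ^ p := by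
  intro n
  induction n with
  | zero => simp [hL0]
  | succ n ih =>
      rw [Finset.sum_range_succ, ih, Finset.sum_range_succ, hLs n]
      have := rpow_max_min (L n) (f (n + 1)) p
      simp only [max_def, min_def] at this ⊢
      linarith

/-- For nonnegative vectors `x_1, …, x_m ∈ ℝ₊^d` and `p ∈ [1,∞)`,
`| ‖x_1 ∨ ⋯ ∨ x_m‖_p^p − ∑ i ‖x_i‖_p^p |` is at most
`m · max_{1 ≤ i < m} ‖(x_1 ∨ ⋯ ∨ x_i) ∧ (x_{i+1} ∨ ⋯ ∨ x_m)‖_p^p`.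
Vectors are indexed by `0, …, m-1`; the split index `l : Fin (m-1)` puts
`x_0, …, x_l` on the left and `x_{l+1}, …, x_{m-1}` on the right. -/
theorem stmt6 {d : ℕ} (m : ℕ) (hm : 1 ≤ m) (p : ℝ) (hp : 1 ≤ p)
    (x : ℕ → Fin d → ℝ) (hx : ∀ i j, 0 ≤ x i j) :
    |(∑ j, (⨆ i : Fin m, x i.1 j) ^ p) - ∑ i ∈ Finset.range m, ∑ j, x i j ^ p|
      ≤ m * ⨆ l : Fin (m - 1), ∑ j,
          (min (⨆ i : Fin (l.1 + 1), x i.1 j)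
               (⨆ i : Fin (m - (l.1 + 1)), x (l.1 + 1 + i.1) j)) ^ p := by
  obtain ⟨n, rfl⟩ : ∃ n, m = n + 1 := ⟨m - 1, by omega⟩
  have hp0 : (0 : ℝ) ≤ p := by linarith
  set Lf : ℕ → Fin d → ℝ := fun l j => ⨆ i : Fin (l + 1), x i.1 j with hLf
  have hLf0 : ∀ j, Lf 0 j = x 0 j := by
    intro j
    simp only [hLf]
    refine le_antisymm (ciSup_le fun i => ?_) ?_
    · have h : i.1 = 0 := by omega
      rw [h]
    · exact le_ciSup (f := fun i : Fin (0 + 1) => x i.1 j)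
        (Set.Finite.bddAbove (Set.finite_range _)) (⟨0, by omega⟩ : Fin (0 + 1))
  have hLfs : ∀ k j, Lf (k + 1) j = max (Lf k j) (x (k + 1) j) :=
    fun k j => ciSup_fin_succ k (fun i => x i j)
  have hLfnn : ∀ l j, 0 ≤ Lf l j := by
    intro l j
    exact le_trans (hx 0 j)
      (le_ciSup (f := fun i : Fin (l + 1) => x i.1 j)
        (Set.Finite.bddAbove (Set.finite_range _)) (⟨0, by omega⟩ : Fin (l + 1)))
  have key : ∀ j, ∑ i ∈ Finset.range (n + 1), x i j ^ p
      = Lf n j ^ p + ∑ l ∈ Finset.range n, (min (Lf l j) (x (l + 1) j)) ^ p := by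
    intro j
    exact tele p (fun i => x i j) (fun l => Lf l j) (hLf0 j) (fun k => hLfs k j) n
  set S : ℝ := ⨆ l : Fin n, ∑ j,
          (min (⨆ i : Fin (l.1 + 1), x i.1 j)
               (⨆ i : Fin (n + 1 - (l.1 + 1)), x (l.1 + 1 + i.1) j)) ^ p with hS
  -- rewrite the sum
  rw [show ∑ i ∈ Finset.range (n + 1), ∑ j, x i j ^ p = ∑ j, ∑ i ∈ Finset.range (n + 1), x i j ^ p
        from Finset.sum_comm]
  have hrw : ∑ j, ∑ i ∈ Finset.range (n + 1), x i j ^ p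
      = (∑ j, Lf n j ^ p) + ∑ j, ∑ l ∈ Finset.range n, (min (Lf l j) (x (l + 1) j)) ^ p := by
    rw [← Finset.sum_add_distrib]
    exact Finset.sum_congr rfl fun j _ => key j
  rw [hrw]
  have habs : |(∑ j, (⨆ i : Fin (n + 1), x i.1 j) ^ p) -
      ((∑ j, Lf n j ^ p) + ∑ j, ∑ l ∈ Finset.range n, (min (Lf l j) (x (l + 1) j)) ^ p)|
      = ∑ j, ∑ l ∈ Finset.range n, (min (Lf l j) (x (l + 1) j)) ^ p := by
    have : (∑ j, (⨆ i : Fin (n + 1), x i.1 j) ^ p) = ∑ j, Lf n j ^ p := rfl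
    rw [this, sub_add_eq_sub_sub, sub_self, zero_sub, abs_neg, abs_of_nonneg]
    apply Finset.sum_nonneg
    intro j _
    apply Finset.sum_nonneg
    intro l _
    exact Real.rpow_nonneg (le_min (hLfnn l j) (hx _ j)) p
  rw [habs]
  -- bound each term by min with the right sup
  have step1 : ∑ j, ∑ l ∈ Finset.range n, (min (Lf l j) (x (l + 1) j)) ^ p
      ≤ ∑ l ∈ Finset.range n, (∑ j, (min (Lf l j)
          (⨆ i : Fin (n + 1 - (l + 1)), x (l + 1 + i.1) j)) ^ p) := by
    rw [Finset.sum_comm]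
    apply Finset.sum_le_sum
    intro l hl
    apply Finset.sum_le_sum
    intro j _
    apply Real.rpow_le_rpow (le_min (hLfnn l j) (hx _ j)) _ hp0
    apply min_le_min le_rfl
    have hlt : l < n := Finset.mem_range.mp hl
    have : x (l + 1) j = x (l + 1 + (0 : ℕ)) j := by norm_num
    rw [this]
    exact le_ciSup (f := fun i : Fin (n + 1 - (l + 1)) => x (l + 1 + i.1) j)
      (Set.Finite.bddAbove (Set.finite_range _)) (⟨0, by omega⟩ : Fin (n + 1 - (l + 1)))
  have step2 : ∑ l ∈ Finset.range n, (∑ j, (min (Lf l j)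
      (⨆ i : Fin (n + 1 - (l + 1)), x (l + 1 + i.1) j)) ^ p) ≤ n * S := by
    have : ∀ l ∈ Finset.range n, (∑ j, (min (Lf l j)
        (⨆ i : Fin (n + 1 - (l + 1)), x (l + 1 + i.1) j)) ^ p) ≤ S := by
      intro l hl
      have hlt : l < n := Finset.mem_range.mp hl
      exact le_ciSup (f := fun l : Fin n => ∑ j, (min (⨆ i : Fin (l.1 + 1), x i.1 j)
          (⨆ i : Fin (n + 1 - (l.1 + 1)), x (l.1 + 1 + i.1) j)) ^ p)
        (Set.Finite.bddAbove (Set.finite_range _)) (⟨l, hlt⟩ : Fin n)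
    calc ∑ l ∈ Finset.range n, (∑ j, (min (Lf l j)
          (⨆ i : Fin (n + 1 - (l + 1)), x (l + 1 + i.1) j)) ^ p)
        ≤ ∑ _l ∈ Finset.range n, S := Finset.sum_le_sum this
      _ = n * S := by simp [mul_comm]
  have hSnn : 0 ≤ S := by
    rcases Nat.eq_zero_or_pos n with h0 | hpos
    · subst h0
      rw [hS, iSup, Set.range_eq_empty, Real.sSup_empty]
    · refine le_trans ?_ (le_ciSup (Set.Finite.bddAbove (Set.finite_range _))
        (⟨0, hpos⟩ : Fin n))
      apply Finset.sum_nonneg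
      intro j _
      exact Real.rpow_nonneg (le_min (hLfnn 0 j) (by
        refine le_trans (hx 1 j) ?_
        exact le_ciSup (f := fun i : Fin (n + 1 - (0 + 1)) => x (0 + 1 + i.1) j)
          (Set.Finite.bddAbove (Set.finite_range _)) (⟨0, by omega⟩ : Fin (n + 1 - (0 + 1))))) p
  calc ∑ j, ∑ l ∈ Finset.range n, (min (Lf l j) (x (l + 1) j)) ^ p
      ≤ n * S := le_trans step1 step2
    _ ≤ (n + 1 : ℕ) * S := by
        apply mul_le_mul_of_nonneg_right _ hSnn
        exact_mod_cast Nat.le_succ n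
end

section
/- For real numbers x_1, …, x_m, the value | |x_1 + ⋯ + x_m| − (|x_1| + ⋯ + |x_m|) | is at most 2m times the second largest value among |x_1|, …, |x_m| (interpreted as 0 if m = 1). -/
open scoped BigOperators

/-- The second largest value among `a 0, …, a (m-1)`, expressed as the supremum of
`min (a i) (a j)` over pairs `i ≠ j` (this equals the second order statistic;
it is `sSup ∅ = 0` when `m ≤ 1`). -/
noncomputable def secondMax {m : ℕ} (a : Fin m → ℝ) : ℝ :=
  sSup {v | ∃ i j : Fin m, i ≠ j ∧ v = min (a i) (a j)}

/-- For reals `x_1, …, x_m`, `| |x_1 + ⋯ + x_m| − (|x_1| + ⋯ + |x_m|) |` is at most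
`2m` times the second largest value among `|x_1|, …, |x_m|`. -/
theorem stmt8 (m : ℕ) (x : Fin m → ℝ) :
    |(|∑ i, x i|) - (∑ i, |x i|)| ≤ 2 * m * secondMax (fun i => |x i|) := by
  have htri : |∑ i, x i| ≤ ∑ i, |x i| := Finset.abs_sum_le_sum_abs _ _
  rw [abs_of_nonpos (by linarith)]
  rcases Nat.lt_or_ge m 2 with hm | hm
  · interval_cases m
    · simp [secondMax]
    · have hset : {v | ∃ i j : Fin 1, i ≠ j ∧ v = min (|x i|) (|x j|)} = ∅ := by
        ext v
        simp only [Set.mem_setOf_eq, Set.mem_empty_iff_false, iff_false]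
        rintro ⟨i, j, hij, -⟩
        exact hij (Subsingleton.elim i j)
      simp [secondMax, hset, Real.sSup_empty]
  · set S := {v | ∃ i j : Fin m, i ≠ j ∧ v = min (|x i|) (|x j|)} with hS
    have hbdd : BddAbove S := by
      refine ⟨∑ i, |x i|, ?_⟩
      rintro v ⟨i, j, hij, rfl⟩
      exact le_trans (min_le_left _ _)
        (Finset.single_le_sum (fun k _ => abs_nonneg (x k)) (Finset.mem_univ i))
    have h01 : (⟨0, by omega⟩ : Fin m) ≠ ⟨1, by omega⟩ := by
      intro h; simpa using congrArg Fin.val h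
    have hs0 : 0 ≤ secondMax (fun i => |x i|) := by
      have hmem : min (|x ⟨0, by omega⟩|) (|x ⟨1, by omega⟩|) ∈ S := ⟨_, _, h01, rfl⟩
      exact le_trans (le_min (abs_nonneg _) (abs_nonneg _)) (le_csSup hbdd hmem)
    obtain ⟨i₀, -, hmax⟩ := Finset.exists_max_image Finset.univ (fun i => |x i|)
      ⟨⟨0, by omega⟩, Finset.mem_univ _⟩
    have hjle : ∀ j : Fin m, j ≠ i₀ → |x j| ≤ secondMax (fun i => |x i|) := by
      intro j hj
      refine le_csSup hbdd ⟨i₀, j, Ne.symm hj, ?_⟩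
      exact (min_eq_right (hmax j (Finset.mem_univ j))).symm
    set s := secondMax (fun i => |x i|)
    set B := ∑ j ∈ Finset.univ.erase i₀, |x j| with hB
    have hBle : B ≤ (m - 1 : ℝ) * s := by
      have := Finset.sum_le_card_nsmul (Finset.univ.erase i₀) (fun j => |x j|) s
        (fun j hj => hjle j (Finset.ne_of_mem_erase hj))
      rw [Finset.card_erase_of_mem (Finset.mem_univ i₀), Finset.card_univ,
        Fintype.card_fin, nsmul_eq_mul] at this
      have hcast : ((m - 1 : ℕ) : ℝ) = (m : ℝ) - 1 := by
        push_cast [Nat.cast_sub (by omega : 1 ≤ m)]; ring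
      rw [← hcast]; exact this
    have hsum : ∑ i, |x i| = |x i₀| + B :=
      (Finset.add_sum_erase _ _ (Finset.mem_univ i₀)).symm
    have hsumx : ∑ i, x i = x i₀ + ∑ j ∈ Finset.univ.erase i₀, x j :=
      (Finset.add_sum_erase _ _ (Finset.mem_univ i₀)).symm
    have habs : |x i₀| ≤ |∑ i, x i| + B := by
      have h1 : x i₀ = (∑ i, x i) - ∑ j ∈ Finset.univ.erase i₀, x j := by
        rw [hsumx]; ring
      have h2 : |∑ j ∈ Finset.univ.erase i₀, x j| ≤ B :=
        Finset.abs_sum_le_sum_abs _ _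
      calc |x i₀| = |(∑ i, x i) - ∑ j ∈ Finset.univ.erase i₀, x j| := by rw [← h1]
        _ ≤ |∑ i, x i| + |∑ j ∈ Finset.univ.erase i₀, x j| := abs_sub _ _
        _ ≤ |∑ i, x i| + B := by linarith
    have hm' : (2 : ℝ) ≤ m := by exact_mod_cast hm
    nlinarith [hBle, hs0, hsum, habs]
end

section
/- For vectors x_1, …, x_m ∈ ℝ^d, the difference | max_{1≤k≤d} |x_{1k} + ⋯ + x_{mk}| − max_{1≤k≤d} max_{1≤i≤m} |x_{ik}| | is at most m · max_{1≤i<j≤m} ‖|x_i| ∧ |x_j|‖_∞, where |x_i| is the vector of absolute values of the components of x_i. -/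
open scoped BigOperators

/-- For vectors `x_1, …, x_m ∈ ℝ^d`,
`| max_k |∑ i x_{ik}| − max_k max_i |x_{ik}| | ≤ m · max_{i ≠ j} ‖ |x_i| ∧ |x_j| ‖_∞`. -/
theorem stmt9 {d : ℕ} (m : ℕ) (x : Fin m → Fin d → ℝ) :
    |(⨆ k : Fin d, |∑ i, x i k|) - (⨆ k : Fin d, ⨆ i, |x i k|)|
      ≤ m * sSup {v | ∃ i j : Fin m, i ≠ j ∧ v = ⨆ k : Fin d, min |x i k| |x j k|} := by
  set g : Fin m → Fin m → ℝ := fun i j => ⨆ k : Fin d, min |x i k| |x j k| with hg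
  set T : Set ℝ := {v | ∃ i j : Fin m, i ≠ j ∧ v = g i j} with hT
  have hTsub : T ⊆ Set.range (fun p : Fin m × Fin m => g p.1 p.2) := by
    rintro v ⟨i, j, _, rfl⟩; exact ⟨(i, j), rfl⟩
  have hTbdd : BddAbove T := ((Set.finite_range _).subset hTsub).bddAbove
  by_cases hm : m ≤ 1
  · have hTempty : T = ∅ := by
      ext v
      simp only [hT, Set.mem_setOf_eq, Set.mem_empty_iff_false, iff_false]
      rintro ⟨i, j, hij, -⟩
      have h1 := i.isLt
      have h2 := j.isLt
      exact hij (Fin.ext (by omega))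
    have hLHS : (⨆ k : Fin d, |∑ i, x i k|) = (⨆ k : Fin d, ⨆ i, |x i k|) := by
      rcases Nat.le_one_iff_eq_zero_or_eq_one.mp hm with rfl | rfl
      · simp [Real.iSup_of_isEmpty]
      · simp [ciSup_unique]
    rw [hLHS, sub_self, abs_zero, hTempty, Real.sSup_empty, mul_zero]
  · push_neg at hm
    have hm2 : 2 ≤ m := hm
    have hmem : ∀ i j : Fin m, i ≠ j → g i j ∈ T := fun i j h => ⟨i, j, h, rfl⟩
    have hgnn : ∀ i j, 0 ≤ g i j := fun i j =>
      Real.iSup_nonneg fun k => le_min (abs_nonneg _) (abs_nonneg _)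
    have h01 : (⟨0, by omega⟩ : Fin m) ≠ ⟨1, by omega⟩ := by
      simp [Fin.ext_iff]
    have hSnn : 0 ≤ sSup T :=
      (hgnn _ _).trans (le_csSup hTbdd (hmem _ _ h01))
    have hminS : ∀ (i j : Fin m) (k : Fin d), i ≠ j → min |x i k| |x j k| ≤ sSup T := by
      intro i j k hij
      calc min |x i k| |x j k| ≤ g i j :=
            le_ciSup (f := fun k => min |x i k| |x j k|)
              (Set.Finite.bddAbove (Set.finite_range _)) k
        _ ≤ sSup T := le_csSup hTbdd (hmem i j hij)
    set S := sSup T with hS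
    have hNe : Nonempty (Fin m) := ⟨⟨0, by omega⟩⟩
    have key : ∀ k : Fin d, |(|∑ i, x i k|) - (⨆ i, |x i k|)| ≤ ((m : ℝ) - 1) * S := by
      intro k
      obtain ⟨i0, hi0⟩ := Finite.exists_max (fun i => |x i k|)
      have hb : (⨆ i, |x i k|) = |x i0 k| :=
        le_antisymm (ciSup_le hi0) (le_ciSup (f := fun i => |x i k|) (Set.Finite.bddAbove (Set.finite_range _)) i0)
      have hsplit : ∑ i, x i k = x i0 k + ∑ i ∈ Finset.univ.erase i0, x i k :=
        (Finset.add_sum_erase _ _ (Finset.mem_univ i0)).symm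
      have hrest : |∑ i ∈ Finset.univ.erase i0, x i k| ≤ ((m : ℝ) - 1) * S := by
        calc |∑ i ∈ Finset.univ.erase i0, x i k|
            ≤ ∑ i ∈ Finset.univ.erase i0, |x i k| := Finset.abs_sum_le_sum_abs _ _
          _ ≤ (Finset.univ.erase i0).card • S := by
              apply Finset.sum_le_card_nsmul
              intro i hi
              have hine : i ≠ i0 := Finset.ne_of_mem_erase hi
              have : min |x i k| |x i0 k| = |x i k| := min_eq_left (hi0 i)
              rw [← this]
              exact hminS i i0 k hine
          _ = ((m : ℝ) - 1) * S := by
              rw [Finset.card_erase_of_mem (Finset.mem_univ i0), Finset.card_univ,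
                Fintype.card_fin, nsmul_eq_mul, Nat.cast_sub (by omega), Nat.cast_one]
      rw [abs_sub_le_iff, hb]
      constructor
      · have : |∑ i, x i k| ≤ |x i0 k| + |∑ i ∈ Finset.univ.erase i0, x i k| := by
          rw [hsplit]; exact abs_add_le _ _
        linarith
      · have : |x i0 k| ≤ |∑ i, x i k| + |∑ i ∈ Finset.univ.erase i0, x i k| := by
          have : x i0 k = (∑ i, x i k) - ∑ i ∈ Finset.univ.erase i0, x i k := by
            rw [hsplit]; ring
          rw [this]
          exact (abs_sub _ _).trans (by rfl)
        linarith
    have hfin : |(⨆ k : Fin d, |∑ i, x i k|) - (⨆ k : Fin d, ⨆ i, |x i k|)|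
        ≤ ((m : ℝ) - 1) * S := by
      rcases isEmpty_or_nonempty (Fin d) with hd | hd
      · rw [Real.iSup_of_isEmpty, Real.iSup_of_isEmpty, sub_self, abs_zero]
        have : (0:ℝ) ≤ (m:ℝ) - 1 := by
          have : (1:ℝ) ≤ m := by exact_mod_cast hm.le
          linarith
        positivity
      · rw [abs_sub_le_iff]
        constructor
        · rw [sub_le_iff_le_add]
          apply ciSup_le
          intro k
          have h1 := (abs_sub_le_iff.mp (key k)).1
          have h2 : (⨆ i, |x i k|) ≤ ⨆ k : Fin d, ⨆ i, |x i k| :=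
            le_ciSup (f := fun k : Fin d => ⨆ i, |x i k|)
              (Set.Finite.bddAbove (Set.finite_range _)) k
          linarith
        · rw [sub_le_iff_le_add]
          apply ciSup_le
          intro k
          have h1 := (abs_sub_le_iff.mp (key k)).2
          have h2 : |∑ i, x i k| ≤ ⨆ k : Fin d, |∑ i, x i k| :=
            le_ciSup (f := fun k : Fin d => |∑ i, x i k|)
              (Set.Finite.bddAbove (Set.finite_range _)) k
          linarith
    calc _ ≤ ((m : ℝ) - 1) * S := hfin
      _ ≤ (m : ℝ) * S := by nlinarith
end

section
/- For p ∈ (1,∞) and real numbers x_1, …, x_m, the absolute value of |x_1 + ⋯ + x_m|^p − (|x_1|^p + ⋯ + |x_m|^p) is at most c · max_{1 ≤ i ≠ j ≤ m} |x_i| · |x_j|^{p−1} for a constant c > 0 depending only on m and p. -/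
open scoped BigOperators

lemma rpow_sub_rpow_le_aux (p : ℝ) (hp : 1 ≤ p) {a b : ℝ} (hb : 0 ≤ b) (hba : b ≤ a) :
    a ^ p - b ^ p ≤ p * a ^ (p - 1) * (a - b) := by
  have hp0 : (0:ℝ) < p := lt_of_lt_of_le one_pos hp
  have ha : 0 ≤ a := hb.trans hba
  rcases eq_or_lt_of_le ha with h | h
  · have ha0 : a = 0 := h.symm
    have hb0 : b = 0 := le_antisymm (hba.trans ha0.le) hb
    subst ha0; subst hb0
    simp [Real.zero_rpow hp0.ne']
  · have hs : (-1 : ℝ) ≤ b / a - 1 := by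
      have : 0 ≤ b / a := div_nonneg hb ha
      linarith
    have key : 1 + p * (b / a - 1) ≤ (b / a) ^ p := by
      have := one_add_mul_self_le_rpow_one_add hs hp
      have e : 1 + (b / a - 1) = b / a := by ring
      rwa [e] at this
    have hap : (0:ℝ) < a ^ p := Real.rpow_pos_of_pos h p
    have h2 : (b / a) ^ p = b ^ p / a ^ p := Real.div_rpow hb ha p
    have h3 : a ^ p = a * a ^ (p - 1) := by
      have := Real.rpow_add h 1 (p - 1)
      have e : 1 + (p - 1) = p := by ring
      rw [e] at this
      rw [this, Real.rpow_one]
    have key2 : (1 + p * (b / a - 1)) * a ^ p ≤ b ^ p := by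
      calc (1 + p * (b / a - 1)) * a ^ p ≤ (b / a) ^ p * a ^ p :=
            mul_le_mul_of_nonneg_right key hap.le
        _ = b ^ p := by rw [h2]; field_simp
    have e2 : (1 + p * (b / a - 1)) * a ^ p = a ^ p + p * ((b - a) * a ^ (p - 1)) := by
      rw [h3]; field_simp
    rw [e2] at key2
    nlinarith

lemma abs_rpow_sub_rpow_le_aux (p : ℝ) (hp : 1 ≤ p) {a b : ℝ} (ha : 0 ≤ a) (hb : 0 ≤ b) :
    |a ^ p - b ^ p| ≤ p * (max a b) ^ (p - 1) * |a - b| := by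
  have hp0 : (0:ℝ) < p := lt_of_lt_of_le one_pos hp
  rcases le_total b a with h | h
  · have h1 : b ^ p ≤ a ^ p := Real.rpow_le_rpow hb h hp0.le
    rw [abs_of_nonneg (by linarith), abs_of_nonneg (by linarith), max_eq_left h]
    exact rpow_sub_rpow_le_aux p hp hb h
  · have h1 : a ^ p ≤ b ^ p := Real.rpow_le_rpow ha h hp0.le
    rw [abs_of_nonpos (by linarith), abs_of_nonpos (by linarith), max_eq_right h,
      neg_sub, neg_sub]
    exact rpow_sub_rpow_le_aux p hp ha h

/-- For `p ∈ (1,∞)` and any `m`, there is a constant `c > 0` (depending only on `m` and `p`)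
such that for all reals `x_1, …, x_m`,
`| |x_1 + ⋯ + x_m|^p − ∑ i |x_i|^p | ≤ c · max_{i ≠ j} |x_i| · |x_j|^{p−1}`. -/
theorem stmt10 (m : ℕ) (p : ℝ) (hp1 : 1 < p) :
    ∃ c > (0 : ℝ), ∀ x : Fin m → ℝ,
      |(|∑ i, x i|) ^ p - ∑ i, |x i| ^ p|
        ≤ c * sSup {v | ∃ i j : Fin m, i ≠ j ∧ v = |x i| * |x j| ^ (p - 1)} := by
  have hp0 : (0:ℝ) < p := lt_trans one_pos hp1
  obtain _ | _ | n := m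
  · refine ⟨1, one_pos, fun x => ?_⟩
    have hS : {v | ∃ i j : Fin 0, i ≠ j ∧ v = |x i| * |x j| ^ (p - 1)} = ∅ := by
      ext v; simp only [Set.mem_setOf_eq, Set.mem_empty_iff_false, iff_false]
      rintro ⟨i, -, -⟩; exact i.elim0
    simp [hS, Real.sSup_empty, Real.zero_rpow hp0.ne']
  · refine ⟨1, one_pos, fun x => ?_⟩
    have hS : {v | ∃ i j : Fin 1, i ≠ j ∧ v = |x i| * |x j| ^ (p - 1)} = ∅ := by
      ext v; simp only [Set.mem_setOf_eq, Set.mem_empty_iff_false, iff_false]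
      rintro ⟨i, j, hij, -⟩; exact hij (Subsingleton.elim i j)
    simp [hS, Real.sSup_empty]
  · set N1 : ℝ := (n : ℝ) + 1 with hN1
    set N2 : ℝ := (n : ℝ) + 2 with hN2
    have hN1pos : 0 < N1 := by positivity
    have hN2pos : 0 < N2 := by positivity
    refine ⟨p * N2 ^ (p - 1) * N1 + N1, by positivity, fun x => ?_⟩
    set S := {v | ∃ i j : Fin (n+2), i ≠ j ∧ v = |x i| * |x j| ^ (p - 1)} with hSdef
    have hSfin : S.Finite := by
      have hsub : S ⊆ (fun q : Fin (n+2) × Fin (n+2) => |x q.1| * |x q.2| ^ (p - 1)) ''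
          Set.univ := by
        rintro v ⟨i, j, hij, rfl⟩; exact ⟨(i, j), trivial, rfl⟩
      exact (Set.finite_univ.image _).subset hsub
    have hbdd : BddAbove S := hSfin.bddAbove
    obtain ⟨k, -, hk⟩ := Finset.exists_max_image (Finset.univ : Finset (Fin (n+2)))
      (fun i => |x i|) ⟨0, Finset.mem_univ 0⟩
    have hcard : (Finset.univ.erase k).card = n + 1 := by
      rw [Finset.card_erase_of_mem (Finset.mem_univ k), Finset.card_univ, Fintype.card_fin]
      omega
    have hne : (Finset.univ.erase k).Nonempty := by
      rw [← Finset.card_pos, hcard]; omega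
    obtain ⟨l, hlmem, hl⟩ := Finset.exists_max_image (Finset.univ.erase k) (fun i => |x i|) hne
    have hlk : l ≠ k := Finset.ne_of_mem_erase hlmem
    set a := |x k| with hadef
    set t := |x l| with htdef
    have ha : 0 ≤ a := abs_nonneg _
    have ht : 0 ≤ t := abs_nonneg _
    have hta : t ≤ a := hk l (Finset.mem_univ l)
    have hX : t * a ^ (p - 1) ≤ sSup S := le_csSup hbdd ⟨l, k, hlk, rfl⟩
    have hY : a * t ^ (p - 1) ≤ sSup S := le_csSup hbdd ⟨k, l, hlk.symm, rfl⟩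
    have hXnn : 0 ≤ t * a ^ (p - 1) := mul_nonneg ht (Real.rpow_nonneg ha _)
    have hYnn : 0 ≤ a * t ^ (p - 1) := mul_nonneg ha (Real.rpow_nonneg ht _)
    set s := ∑ i, x i with hsdef
    have hsum : ∑ i ∈ Finset.univ.erase k, x i + x k = s :=
      Finset.sum_erase_add _ _ (Finset.mem_univ k)
    have h1 : |s - x k| ≤ N1 * t := by
      have e : s - x k = ∑ i ∈ Finset.univ.erase k, x i := by rw [← hsum]; ring
      rw [e]
      calc |∑ i ∈ Finset.univ.erase k, x i| ≤ ∑ i ∈ Finset.univ.erase k, |x i| :=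
            Finset.abs_sum_le_sum_abs _ _
        _ ≤ ∑ _i ∈ Finset.univ.erase k, t := Finset.sum_le_sum (fun i hi => hl i hi)
        _ = N1 * t := by
            rw [Finset.sum_const, hcard, nsmul_eq_mul, hN1]; push_cast; ring
    have h2 : abs (|s| - a) ≤ N1 * t := (abs_abs_sub_abs_le_abs_sub s (x k)).trans h1
    have h3 : |s| ≤ N2 * a := by
      calc |s| ≤ ∑ i, |x i| := Finset.abs_sum_le_sum_abs _ _
        _ ≤ ∑ _i : Fin (n+2), a := Finset.sum_le_sum (fun i _ => hk i (Finset.mem_univ i))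
        _ = N2 * a := by
            rw [Finset.sum_const, Finset.card_univ, Fintype.card_fin, nsmul_eq_mul, hN2]
            push_cast; ring
    have hmax : max |s| a ≤ N2 * a := by
      refine max_le h3 ?_
      nlinarith
    have hmaxnn : 0 ≤ max |s| a := le_trans ha (le_max_right _ _)
    have hT1 : abs (|s| ^ p - a ^ p) ≤ p * N2 ^ (p - 1) * N1 * (t * a ^ (p - 1)) := by
      have step1 : abs (|s| ^ p - a ^ p) ≤ p * (max |s| a) ^ (p - 1) * abs (|s| - a) :=
        abs_rpow_sub_rpow_le_aux p hp1.le (abs_nonneg s) ha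
      have step2 : (max |s| a) ^ (p - 1) ≤ (N2 * a) ^ (p - 1) :=
        Real.rpow_le_rpow hmaxnn hmax (by linarith)
      have step3 : (N2 * a) ^ (p - 1) = N2 ^ (p - 1) * a ^ (p - 1) :=
        Real.mul_rpow hN2pos.le ha
      calc abs (|s| ^ p - a ^ p) ≤ p * (max |s| a) ^ (p - 1) * abs (|s| - a) := step1
        _ ≤ p * ((N2 * a) ^ (p - 1)) * (N1 * t) := by
            apply mul_le_mul (mul_le_mul_of_nonneg_left step2 hp0.le) h2 (abs_nonneg _)
            positivity
        _ = p * N2 ^ (p - 1) * N1 * (t * a ^ (p - 1)) := by rw [step3]; ring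
    have hT2 : ∑ i ∈ Finset.univ.erase k, |x i| ^ p ≤ N1 * (a * t ^ (p - 1)) := by
      have htp : t ^ p = t * t ^ (p - 1) := by
        have e : (1 : ℝ) + (p - 1) = p := by ring
        nth_rewrite 1 [← e]
        rw [Real.rpow_add' ht (by rw [e]; exact hp0.ne'), Real.rpow_one]
      calc ∑ i ∈ Finset.univ.erase k, |x i| ^ p
          ≤ ∑ _i ∈ Finset.univ.erase k, t ^ p :=
            Finset.sum_le_sum (fun i hi => Real.rpow_le_rpow (abs_nonneg _) (hl i hi) hp0.le)
        _ = N1 * t ^ p := by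
            rw [Finset.sum_const, hcard, nsmul_eq_mul, hN1]; push_cast; ring
        _ ≤ N1 * (a * t ^ (p - 1)) := by
            rw [htp]
            exact mul_le_mul_of_nonneg_left
              (mul_le_mul_of_nonneg_right hta (Real.rpow_nonneg ht _)) hN1pos.le
    have hsplit : ∑ i, |x i| ^ p = ∑ i ∈ Finset.univ.erase k, |x i| ^ p + a ^ p :=
      (Finset.sum_erase_add _ _ (Finset.mem_univ k)).symm
    have hsumnn : 0 ≤ ∑ i ∈ Finset.univ.erase k, |x i| ^ p :=
      Finset.sum_nonneg (fun i _ => Real.rpow_nonneg (abs_nonneg _) _)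
    calc |(|s|) ^ p - ∑ i, |x i| ^ p|
        = |(|s| ^ p - a ^ p) - ∑ i ∈ Finset.univ.erase k, |x i| ^ p| := by
          rw [hsplit]; congr 1; ring
      _ ≤ abs (|s| ^ p - a ^ p) + |∑ i ∈ Finset.univ.erase k, |x i| ^ p| := abs_sub _ _
      _ = abs (|s| ^ p - a ^ p) + ∑ i ∈ Finset.univ.erase k, |x i| ^ p := by
          rw [abs_of_nonneg hsumnn]
      _ ≤ p * N2 ^ (p - 1) * N1 * (t * a ^ (p - 1)) + N1 * (a * t ^ (p - 1)) :=
          add_le_add hT1 hT2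
      _ ≤ p * N2 ^ (p - 1) * N1 * sSup S + N1 * sSup S := by
          refine add_le_add (mul_le_mul_of_nonneg_left hX (by positivity))
            (mul_le_mul_of_nonneg_left hY hN1pos.le)
      _ = (p * N2 ^ (p - 1) * N1 + N1) * sSup S := by ring
end

section
/- If η is a Fréchet(r) random variable with P(η ≤ u) = exp(−u^{−r}) for u > 0 and ζ is an independent nonnegative random variable with Laplace transform E[exp(−tζ)] = exp(−t^{1/r}) for t ≥ 0, and η_1, …, η_d are i.i.d. copies of η independent of ζ, then the random vector X = ζ^{1/r}(η_1, …, η_d) satisfies P(X ≤ u) = exp(−‖u^{−1}‖_r) for all u ∈ (0,∞)^d, where u^{−1} = (u_1^{−1}, …, u_d^{−1}) and ‖·‖_r is the ℓ_r norm. -/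
open MeasureTheory ProbabilityTheory
open scoped BigOperators

/-- If `η_1, …, η_d` are i.i.d. Fréchet(r) random variables (cdf `exp(−u^{−r})` on `(0,∞)`),
`ζ ≥ 0` is independent of them with Laplace transform `E[e^{−tζ}] = e^{−t^{1/r}}`, then
`X = ζ^{1/r}·(η_1,…,η_d)` has the logistic max-stable distribution
`P(X ≤ u) = exp(−‖u^{−1}‖_r)` for `u ∈ (0,∞)^d`. -/
theorem stmt13 {Ω : Type*} [MeasurableSpace Ω] (μ : Measure Ω) [IsProbabilityMeasure μ]
    (r : ℝ) (hr : 1 < r) (d : ℕ)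
    (ζ : Ω → ℝ) (η : Fin d → Ω → ℝ)
    (hζm : Measurable ζ) (hηm : ∀ i, Measurable (η i))
    (hζ0 : ∀ ω, 0 ≤ ζ ω)
    (hindep : iIndepFun η μ)
    (hζη : IndepFun ζ (fun ω i => η i ω) μ)
    (hη : ∀ i, ∀ u > (0 : ℝ), (μ {ω | η i ω ≤ u}).toReal = Real.exp (-(u ^ (-r))))
    (hζ : ∀ t ≥ (0 : ℝ), (∫ ω, Real.exp (-(t * ζ ω)) ∂μ) = Real.exp (-(t ^ (1 / r)))) :
    ∀ u : Fin d → ℝ, (∀ i, 0 < u i) →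
      (μ {ω | ∀ i, ζ ω ^ (1 / r) * η i ω ≤ u i}).toReal
        = Real.exp (-(∑ i, ((u i)⁻¹) ^ r) ^ (1 / r)) := by
  intro u hu
  have hr0 : (0:ℝ) < r := lt_trans one_pos hr
  have hrne : r ≠ 0 := ne_of_gt hr0
  set Y : Ω → (Fin d → ℝ) := fun ω i => η i ω with hYdef
  have hYm : Measurable Y := measurable_pi_lambda _ (fun i => hηm i)
  set t : ℝ := ∑ i, ((u i)⁻¹) ^ r with htdef
  have ht0 : 0 ≤ t := Finset.sum_nonneg fun i _ =>
    Real.rpow_nonneg (inv_nonneg.2 (hu i).le) _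
  -- inner computation
  have inner : ∀ s : ℝ, 0 ≤ s →
      μ {ω | ∀ i, s ^ (1/r) * η i ω ≤ u i}
        = ENNReal.ofReal (Real.exp (-(t * s))) := by
    intro s hs
    rcases eq_or_lt_of_le hs with hs0 | hs0
    · have h0 : s = 0 := hs0.symm
      subst h0
      have hz : (0:ℝ) ^ (1/r) = 0 := Real.zero_rpow (by positivity)
      simp only [hz, zero_mul, mul_zero, neg_zero, Real.exp_zero, ENNReal.ofReal_one]
      have : {ω : Ω | ∀ i, (0:ℝ) ≤ u i} = Set.univ := by
        ext ω; simp [fun i => (hu i).le]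
      rw [this]; simp
    · have hc : 0 < s ^ (1/r) := Real.rpow_pos_of_pos hs0 _
      have hset : {ω | ∀ i, s ^ (1/r) * η i ω ≤ u i}
          = ⋂ i ∈ Finset.univ, η i ⁻¹' Set.Iic (u i / s ^ (1/r)) := by
        ext ω
        simp only [Set.mem_setOf_eq, Set.mem_iInter, Set.mem_preimage, Set.mem_Iic,
          Finset.mem_univ, forall_const]
        constructor
        · intro h i; rw [le_div_iff₀ hc]; linarith [h i]
        · intro h i; have := (le_div_iff₀ hc).1 (h i); linarith
      rw [hset, hindep.measure_inter_preimage_eq_mul Finset.univ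
        (fun i _ => measurableSet_Iic)]
      have hfac : ∀ i : Fin d, μ (η i ⁻¹' Set.Iic (u i / s ^ (1/r)))
          = ENNReal.ofReal (Real.exp (-(((u i)⁻¹) ^ r * s))) := by
        intro i
        have hpos : 0 < u i / s ^ (1/r) := div_pos (hu i) hc
        have h1 := hη i _ hpos
        have hne : μ (η i ⁻¹' Set.Iic (u i / s ^ (1/r))) ≠ ⊤ := measure_ne_top _ _
        have heq : (u i / s ^ (1/r)) ^ (-r) = ((u i)⁻¹) ^ r * s := by
          rw [Real.rpow_neg hpos.le, ← Real.inv_rpow hpos.le, inv_div, div_eq_mul_inv,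
            Real.mul_rpow hc.le (inv_nonneg.2 (hu i).le),
            ← Real.rpow_mul hs, one_div, inv_mul_cancel₀ hrne, Real.rpow_one, mul_comm]
        have htr : (μ (η i ⁻¹' Set.Iic (u i / s ^ (1/r)))).toReal
            = Real.exp (-(((u i)⁻¹) ^ r * s)) := by
          rw [show (η i ⁻¹' Set.Iic (u i / s ^ (1/r))) = {ω | η i ω ≤ u i / s ^ (1/r)} from rfl,
            h1, heq]
        rw [← htr, ENNReal.ofReal_toReal hne]
      simp_rw [hfac]
      rw [← ENNReal.ofReal_prod_of_nonneg (fun i _ => (Real.exp_pos _).le)]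
      congr 1
      rw [← Real.exp_sum]
      congr 1
      rw [htdef, Finset.sum_mul, ← Finset.sum_neg_distrib]
  -- measurability of sets
  have hSm : MeasurableSet {p : ℝ × (Fin d → ℝ) | ∀ i, p.1 ^ (1/r) * p.2 i ≤ u i} := by
    rw [Set.setOf_forall]
    exact MeasurableSet.iInter fun i =>
      measurableSet_le ((measurable_fst.pow measurable_const).mul
        ((measurable_pi_apply i).comp measurable_snd)) measurable_const
  have hTm : ∀ s : ℝ, MeasurableSet {y : Fin d → ℝ | ∀ i, s ^ (1/r) * y i ≤ u i} := by
    intro s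
    rw [Set.setOf_forall]
    exact MeasurableSet.iInter fun i =>
      measurableSet_le ((measurable_pi_apply i).const_mul _) measurable_const
  -- rewrite as product measure
  have hmap : μ {ω | ∀ i, ζ ω ^ (1/r) * η i ω ≤ u i}
      = ((μ.map ζ).prod (μ.map Y)) {p : ℝ × (Fin d → ℝ) | ∀ i, p.1 ^ (1/r) * p.2 i ≤ u i} := by
    rw [← (indepFun_iff_map_prod_eq_prod_map_map hζm.aemeasurable hYm.aemeasurable).1 hζη,
      Measure.map_apply (hζm.prodMk hYm) hSm]
    rfl
  have hae : ∀ᵐ s ∂(μ.map ζ), 0 ≤ s := by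
    rw [ae_map_iff hζm.aemeasurable (measurableSet_Ici : MeasurableSet {s : ℝ | 0 ≤ s})]
    exact ae_of_all _ hζ0
  have hprod : ((μ.map ζ).prod (μ.map Y)) {p : ℝ × (Fin d → ℝ) | ∀ i, p.1 ^ (1/r) * p.2 i ≤ u i}
      = ∫⁻ s, ENNReal.ofReal (Real.exp (-(t * s))) ∂(μ.map ζ) := by
    rw [Measure.prod_apply hSm]
    refine lintegral_congr_ae (hae.mono fun s hs => ?_)
    dsimp only
    have hpre : (Prod.mk s ⁻¹' {p : ℝ × (Fin d → ℝ) | ∀ i, p.1 ^ (1/r) * p.2 i ≤ u i})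
        = {y : Fin d → ℝ | ∀ i, s ^ (1/r) * y i ≤ u i} := rfl
    rw [hpre, Measure.map_apply hYm (hTm s)]
    have : (Y ⁻¹' {y : Fin d → ℝ | ∀ i, s ^ (1/r) * y i ≤ u i})
        = {ω | ∀ i, s ^ (1/r) * η i ω ≤ u i} := rfl
    rw [this, inner s hs]
  have hg : Measurable fun s : ℝ => ENNReal.ofReal (Real.exp (-(t * s))) :=
    (Real.measurable_exp.comp ((measurable_id.const_mul t).neg)).ennreal_ofReal
  have hlm : ∫⁻ s, ENNReal.ofReal (Real.exp (-(t * s))) ∂(μ.map ζ)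
      = ∫⁻ ω, ENNReal.ofReal (Real.exp (-(t * ζ ω))) ∂μ := lintegral_map hg hζm
  have hint : Integrable (fun ω => Real.exp (-(t * ζ ω))) μ := by
    refine Integrable.mono' (integrable_const 1) ?_ (ae_of_all _ fun ω => ?_)
    · exact ((hζm.const_mul t).neg.exp).aestronglyMeasurable
    · rw [Real.norm_eq_abs, abs_of_pos (Real.exp_pos _)]
      exact Real.exp_le_one_iff.2 (neg_nonpos.2 (mul_nonneg ht0 (hζ0 ω)))
  have hofr : ∫⁻ ω, ENNReal.ofReal (Real.exp (-(t * ζ ω))) ∂μ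
      = ENNReal.ofReal (∫ ω, Real.exp (-(t * ζ ω)) ∂μ) :=
    (ofReal_integral_eq_lintegral_ofReal hint (ae_of_all _ fun ω => (Real.exp_pos _).le)).symm
  rw [hmap, hprod, hlm, hofr, hζ t ht0, ENNReal.toReal_ofReal (Real.exp_pos _).le]
end

section
/- Let ξ_1, ξ_2 be i.i.d. nonnegative random variables with regularly varying tail F̄ of index −α (α > 0), let d = d(n) → ∞, and define a_n by the requirement (nd)·F̄(a_n) → 1 as n → ∞. Then for every ε > 0, n² · (1 − (1 − F̄(ε a_n)²)^d) → 0 as n → ∞. -/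
open MeasureTheory Filter
open scoped BigOperators

/-- Let `ξ ≥ 0` have regularly varying tail `T(t) = P(ξ > t)` of index `−α` (`α > 0`),
let `d = d(n) → ∞`, and let `a_n → ∞` satisfy `n·d(n)·T(a_n) → 1`. Then for every `ε > 0`,
`n² · (1 − (1 − T(ε a_n)²)^{d(n)}) → 0` as `n → ∞`. -/
theorem stmt16 {Ω : Type*} [MeasurableSpace Ω] (μ : Measure Ω) [IsProbabilityMeasure μ]
    (ξ : Ω → ℝ) (hmeas : Measurable ξ) (hnonneg : ∀ ω, 0 ≤ ξ ω)
    (α : ℝ) (hα : 0 < α)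
    (hpos : ∀ᶠ t in atTop, 0 < (μ {ω | t < ξ ω}).toReal)
    (hreg : ∀ c > (0 : ℝ), Tendsto
      (fun t => (μ {ω | c * t < ξ ω}).toReal / (μ {ω | t < ξ ω}).toReal)
      atTop (nhds (c ^ (-α))))
    (d : ℕ → ℕ) (hd : Tendsto (fun n => (d n : ℝ)) atTop atTop)
    (a : ℕ → ℝ) (ha : Tendsto a atTop atTop)
    (han : Tendsto (fun n : ℕ => (n : ℝ) * (d n : ℝ) * (μ {ω | a n < ξ ω}).toReal)
      atTop (nhds 1)) :
    ∀ ε > (0 : ℝ), Tendsto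
      (fun n : ℕ => (n : ℝ) ^ 2 *
        (1 - (1 - (μ {ω | ε * a n < ξ ω}).toReal ^ 2) ^ (d n)))
      atTop (nhds 0) := by
  intro ε hε
  set T : ℝ → ℝ := fun t => (μ {ω | t < ξ ω}).toReal with hTdef
  have hT0 : ∀ t, 0 ≤ T t := fun t => ENNReal.toReal_nonneg
  have hT1 : ∀ t, T t ≤ 1 := by
    intro t
    have h := prob_le_one (μ := μ) (s := {ω | t < ξ ω})
    simpa [hTdef] using ENNReal.toReal_le_of_le_ofReal zero_le_one (by simpa using h)
  -- ratio tendsto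
  have hrat : Tendsto (fun n => T (ε * a n) / T (a n)) atTop (nhds (ε ^ (-α))) :=
    (hreg ε hε).comp ha
  -- eventual positivity
  have hTpos : ∀ᶠ n in atTop, 0 < T (a n) := ha.eventually hpos
  have hdpos : ∀ᶠ n : ℕ in atTop, (0 : ℝ) < (d n : ℝ) := hd.eventually_gt_atTop 0
  have hinv : Tendsto (fun n : ℕ => ((d n : ℝ))⁻¹) atTop (nhds 0) :=
    hd.inv_tendsto_atTop
  -- auxiliary sequence g
  have hg : Tendsto (fun n : ℕ =>
      ((n : ℝ) * (d n : ℝ) * T (a n)) ^ 2 * (T (ε * a n) / T (a n)) ^ 2 * ((d n : ℝ))⁻¹)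
      atTop (nhds 0) := by
    have := ((han.pow 2).mul (hrat.pow 2)).mul hinv
    simpa using this
  -- g eventually equals n² d T(εa)²
  have hcongr : Tendsto (fun n : ℕ => (n : ℝ) ^ 2 * (d n : ℝ) * T (ε * a n) ^ 2)
      atTop (nhds 0) := by
    refine hg.congr' ?_
    filter_upwards [hTpos, hdpos] with n h1 h2
    field_simp
  -- squeeze
  refine squeeze_zero' ?_ ?_ hcongr
  · filter_upwards with n
    have hp : T (ε * a n) ^ 2 ≤ 1 := by
      have := hT1 (ε * a n); have := hT0 (ε * a n); nlinarith
    have hp0 : 0 ≤ T (ε * a n) ^ 2 := sq_nonneg _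
    have : (1 - T (ε * a n) ^ 2) ^ (d n) ≤ 1 :=
      pow_le_one₀ (by linarith) (by linarith)
    have hn2 : (0 : ℝ) ≤ (n : ℝ) ^ 2 := sq_nonneg _
    nlinarith
  · filter_upwards with n
    have hp : T (ε * a n) ^ 2 ≤ 1 := by
      have := hT1 (ε * a n); have := hT0 (ε * a n); nlinarith
    have hb : 1 + (d n : ℝ) * (-(T (ε * a n) ^ 2)) ≤ (1 + -(T (ε * a n) ^ 2)) ^ (d n) :=
      one_add_mul_le_pow (by linarith) (d n)
    have hle : 1 - (1 - T (ε * a n) ^ 2) ^ (d n) ≤ (d n : ℝ) * T (ε * a n) ^ 2 := by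
      have : 1 - (d n : ℝ) * T (ε * a n) ^ 2 ≤ (1 - T (ε * a n) ^ 2) ^ (d n) := by
        simpa [sub_eq_add_neg, mul_neg] using hb
      linarith
    have hn2 : (0 : ℝ) ≤ (n : ℝ) ^ 2 := sq_nonneg _
    calc (n : ℝ) ^ 2 * (1 - (1 - T (ε * a n) ^ 2) ^ (d n))
        ≤ (n : ℝ) ^ 2 * ((d n : ℝ) * T (ε * a n) ^ 2) := by
          exact mul_le_mul_of_nonneg_left hle hn2
      _ = (n : ℝ) ^ 2 * (d n : ℝ) * T (ε * a n) ^ 2 := by ring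
end

section
/- Let γ ∈ (0,1) and θ_1, …, θ_{m+1} > 0. Define p_{n₁,…,n_k} = (Σ_{i=1}^k θ_i)^γ π^{(k)}_{n₁,…,n_k}, where π^{(k)} is the multivariate Sibuya distribution with index γ and weights q_i = θ_i/Σ_{j≤k} θ_j. Then the family is consistent: for every multi-index (n₁,…,n_m) with at least one positive entry, p_{n₁,…,n_m} = Σ_{k=0}^∞ p_{n₁,…,n_m,k}. -/
open scoped BigOperators


/-- The equivalence `ℕ × (Fin m → ℕ) ≃ (Fin (m+1) → ℕ)` via `snoc`. -/
def sibuyaEquiv (m : ℕ) : ℕ × (Fin m → ℕ) ≃ (Fin (m + 1) → ℕ) where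
  toFun p := Fin.snoc p.2 p.1
  invFun x := (x (Fin.last m), Fin.init x)
  left_inv p := by simp [Fin.init_snoc, Fin.snoc_last]
  right_inv x := by simp [Fin.snoc_init_self]

lemma sibuya_prod_bounds {m : ℕ} (z : Fin m → ℝ) (hz : ∀ i, z i ∈ Set.Icc (0:ℝ) 1)
    (n : Fin m → ℕ) : (0:ℝ) ≤ ∏ i, z i ^ n i ∧ (∏ i, z i ^ n i) ≤ 1 := by
  constructor
  · exact Finset.prod_nonneg fun i _ => pow_nonneg (hz i).1 _
  · exact Finset.prod_le_one (fun i _ => pow_nonneg (hz i).1 _)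
      (fun i _ => pow_le_one₀ (hz i).1 (hz i).2)


lemma sibuya_aux_zero (c : ℕ → ℝ) (hc : Summable c)
    (hct : ∀ t ∈ Set.Ioc (0:ℝ) 1, HasSum (fun k => c k * t ^ k) 0) : c 0 = 0 := by
  have hcabs : Summable fun k => |c k| := hc.abs
  have hCsum : Summable fun k => |c (k + 1)| := (summable_nat_add_iff 1).2 hcabs
  set C := ∑' k, |c (k + 1)| with hCdef
  have hC0 : 0 ≤ C := tsum_nonneg fun _ => abs_nonneg _
  have key : ∀ t ∈ Set.Ioc (0:ℝ) 1, |c 0| ≤ t * C := by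
    intro t ht
    have h1 := hct t ht
    have h2 : HasSum (fun k => c (k + 1) * t ^ (k + 1)) (-(c 0)) := by
      refine (hasSum_nat_add_iff (f := fun k => c k * t ^ k) 1).2 ?_
      simpa using h1
    have htsum : ∑' k, c (k + 1) * t ^ (k + 1) = -(c 0) := h2.tsum_eq
    have hb : ∀ k, |c (k + 1) * t ^ (k + 1)| ≤ |c (k + 1)| * t := by
      intro k
      rw [abs_mul]
      refine mul_le_mul_of_nonneg_left ?_ (abs_nonneg _)
      rw [abs_of_nonneg (pow_nonneg ht.1.le _)]
      calc t ^ (k + 1) ≤ t ^ 1 := pow_le_pow_of_le_one ht.1.le ht.2 (Nat.le_add_left 1 k)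
        _ = t := pow_one t
    have hsum2 : Summable fun k => |c (k + 1)| * t := hCsum.mul_right t
    have hsum1 : Summable fun k => |c (k + 1) * t ^ (k + 1)| :=
      Summable.of_nonneg_of_le (fun _ => abs_nonneg _) hb hsum2
    calc |c 0| = |∑' k, c (k + 1) * t ^ (k + 1)| := by rw [htsum, abs_neg]
      _ ≤ ∑' k, |c (k + 1) * t ^ (k + 1)| := by
          have hsum1' : Summable fun k => ‖c (k + 1) * t ^ (k + 1)‖ := by
            simpa only [Real.norm_eq_abs] using hsum1
          have := norm_tsum_le_tsum_norm (f := fun k => c (k + 1) * t ^ (k + 1)) hsum1'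
          simpa only [Real.norm_eq_abs] using this
      _ ≤ ∑' k, |c (k + 1)| * t := Summable.tsum_le_tsum hb hsum1 hsum2
      _ = C * t := tsum_mul_right
      _ = t * C := mul_comm _ _
  by_contra h0
  have habs0 : 0 < |c 0| := abs_pos.2 h0
  set t := min 1 (|c 0| / (2 * (C + 1))) with htdef
  have ht : t ∈ Set.Ioc (0:ℝ) 1 := ⟨lt_min one_pos (div_pos habs0 (by positivity)), min_le_left _ _⟩
  have h1 := key t ht
  have h2 : t * C ≤ (|c 0| / (2 * (C + 1))) * C :=
    mul_le_mul_of_nonneg_right (min_le_right _ _) hC0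
  have h3 : (|c 0| / (2 * (C + 1))) * C < |c 0| := by
    rw [div_mul_eq_mul_div, div_lt_iff₀ (by positivity)]
    nlinarith
  linarith

lemma sibuya_aux_one (a : ℕ → ℝ) (ha : Summable a)
    (h : ∀ t ∈ Set.Ioc (0:ℝ) 1, HasSum (fun k => a k * t ^ k) 0) : ∀ j, a j = 0 := by
  have hsummable : ∀ j, Summable fun k => a (j + k) := by
    intro j
    have := (summable_nat_add_iff j).2 ha
    simpa [add_comm] using this
  have key : ∀ j, ∀ t ∈ Set.Ioc (0:ℝ) 1, HasSum (fun k => a (j + k) * t ^ k) 0 := by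
    intro j
    induction j with
    | zero => simpa using h
    | succ j ih =>
      have haj : a j = 0 := by
        have := sibuya_aux_zero (fun k => a (j + k)) (hsummable j) ih
        simpa using this
      intro t ht
      have h1 := ih t ht
      have h2 : HasSum (fun k => a (j + (k + 1)) * t ^ (k + 1)) 0 := by
        have := (hasSum_nat_add_iff (f := fun k => a (j + k) * t ^ k) 1
          (g := (0:ℝ))).2 (by simpa [haj] using h1)
        simpa [haj] using this
      have h3 := h2.mul_right t⁻¹
      have heq : ∀ k, a (j + (k + 1)) * t ^ (k + 1) * t⁻¹ = a (j + 1 + k) * t ^ k := by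
        intro k
        rw [pow_succ, show j + (k + 1) = j + 1 + k by ring]
        have ht0 : t ≠ 0 := ht.1.ne'
        field_simp
      simpa [heq] using h3
  intro j
  have := sibuya_aux_zero (fun k => a (j + k)) (hsummable j) (key j)
  simpa using this

lemma sibuya_aux_multi : ∀ (m : ℕ) (a : (Fin m → ℕ) → ℝ), Summable a →
    (∀ z : Fin m → ℝ, (∀ i, z i ∈ Set.Icc (0:ℝ) 1) →
      HasSum (fun n => a n * ∏ i, z i ^ n i) 0) →
    ∀ n, a n = 0 := by
  intro m
  induction m with
  | zero =>
    intro a _ h n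
    have h0 := h 0 (fun i => i.elim0)
    have h1 : HasSum (fun n : Fin 0 → ℕ => a n * ∏ i, (0:Fin 0 → ℝ) i ^ n i)
        (∑ x : Fin 0 → ℕ, a x * ∏ i, (0:Fin 0 → ℝ) i ^ x i) := hasSum_fintype _
    have h2 := h0.unique h1
    have h3 : ∑ x : Fin 0 → ℕ, a x * ∏ i, (0:Fin 0 → ℝ) i ^ x i = a n := by
      rw [Finset.sum_eq_single n]
      · simp
      · intro b _ hb
        exact absurd (funext fun i => i.elim0 : b = n) hb
      · intro hn; exact absurd (Finset.mem_univ n) hn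
    rw [h3] at h2
    exact h2.symm
  | succ m ih =>
    intro a ha h
    have haE : Summable fun p : ℕ × (Fin m → ℕ) => a (Fin.snoc p.2 p.1) :=
      ((sibuyaEquiv m).summable_iff (f := a)).2 ha
    have habsE : Summable fun p : ℕ × (Fin m → ℕ) => |a (Fin.snoc p.2 p.1)| := haE.abs
    have hinj : ∀ k : ℕ, Function.Injective (fun n : Fin m → ℕ => ((k, n) : ℕ × (Fin m → ℕ))) := by
      intro k x y hxy
      simpa using congrArg Prod.snd hxy
    have hfib : ∀ k, Summable fun n : Fin m → ℕ => a (Fin.snoc n k) := by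
      intro k
      have := haE.comp_injective (hinj k)
      simpa [Function.comp_def] using this
    have hfibAbs : ∀ k, Summable fun n : Fin m → ℕ => |a (Fin.snoc n k)| := by
      intro k
      have := habsE.comp_injective (hinj k)
      simpa [Function.comp_def] using this
    have hCsum : Summable fun k => ∑' n : Fin m → ℕ, |a (Fin.snoc n k)| :=
      ⟨_, HasSum.prod_fiberwise habsE.hasSum fun k => (hfibAbs k).hasSum⟩
    have hBzero : ∀ (z' : Fin m → ℝ), (∀ i, z' i ∈ Set.Icc (0:ℝ) 1) →
        ∀ k, HasSum (fun n : Fin m → ℕ => a (Fin.snoc n k) * ∏ i, z' i ^ n i) 0 := by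
      intro z' hz'
      have hbound : ∀ (k : ℕ) (n : Fin m → ℕ),
          |a (Fin.snoc n k) * ∏ i, z' i ^ n i| ≤ |a (Fin.snoc n k)| := by
        intro k n
        rw [abs_mul]
        have hb := sibuya_prod_bounds z' hz' n
        calc |a (Fin.snoc n k)| * |∏ i, z' i ^ n i| ≤ |a (Fin.snoc n k)| * 1 := by
              refine mul_le_mul_of_nonneg_left ?_ (abs_nonneg _)
              rw [abs_of_nonneg hb.1]; exact hb.2
          _ = |a (Fin.snoc n k)| := mul_one _
      have hfibz : ∀ k, Summable fun n : Fin m → ℕ => a (Fin.snoc n k) * ∏ i, z' i ^ n i := by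
        intro k
        refine Summable.of_norm_bounded (hfibAbs k) fun n => ?_
        rw [Real.norm_eq_abs]
        exact hbound k n
      set B : ℕ → ℝ := fun k => ∑' n : Fin m → ℕ, a (Fin.snoc n k) * ∏ i, z' i ^ n i with hB
      have hBsummable : Summable B := by
        refine Summable.of_norm_bounded hCsum fun k => ?_
        rw [Real.norm_eq_abs]
        have h1 : Summable fun n : Fin m → ℕ => ‖a (Fin.snoc n k) * ∏ i, z' i ^ n i‖ := by
          simpa only [Real.norm_eq_abs] using (hfibz k).abs
        have h2 := norm_tsum_le_tsum_norm h1
        rw [Real.norm_eq_abs] at h2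
        refine h2.trans ?_
        refine Summable.tsum_le_tsum (fun n => ?_)
          (by simpa only [Real.norm_eq_abs] using (hfibz k).abs) (hfibAbs k)
        rw [Real.norm_eq_abs]
        exact hbound k n
      have hBt : ∀ t ∈ Set.Ioc (0:ℝ) 1, HasSum (fun k => B k * t ^ k) 0 := by
        intro t ht
        have hzfull : ∀ i, (Fin.snoc z' t : Fin (m+1) → ℝ) i ∈ Set.Icc (0:ℝ) 1 := by
          intro i
          induction i using Fin.lastCases with
          | last => simp only [Fin.snoc_last]; exact ⟨ht.1.le, ht.2⟩
          | cast j => simp only [Fin.snoc_castSucc]; exact hz' j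
        have h0 := h (Fin.snoc z' t) hzfull
        have h1 : HasSum (fun p : ℕ × (Fin m → ℕ) =>
            a (Fin.snoc p.2 p.1) *
              ∏ i, (Fin.snoc z' t : Fin (m+1) → ℝ) i ^ (Fin.snoc p.2 p.1 : Fin (m+1) → ℕ) i) 0 := by
          have h1' := ((sibuyaEquiv m).hasSum_iff
            (f := fun n => a n * ∏ i, (Fin.snoc z' t : Fin (m+1) → ℝ) i ^ n i)).2 h0
          simp only [Function.comp_def, sibuyaEquiv, Equiv.coe_fn_mk] at h1'
          exact h1'
        have hEq : (fun p : ℕ × (Fin m → ℕ) =>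
            a (Fin.snoc p.2 p.1) *
              ∏ i, (Fin.snoc z' t : Fin (m+1) → ℝ) i ^ (Fin.snoc p.2 p.1 : Fin (m+1) → ℕ) i)
            = fun p : ℕ × (Fin m → ℕ) =>
              (a (Fin.snoc p.2 p.1) * ∏ i, z' i ^ p.2 i) * t ^ p.1 := by
          funext p
          rw [Fin.prod_univ_castSucc]
          simp only [Fin.snoc_castSucc, Fin.snoc_last]
          ring
        rw [hEq] at h1
        exact h1.prod_fiberwise fun k => (hfibz k).hasSum.mul_right _
      intro k
      have := sibuya_aux_one B hBsummable hBt k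
      have h4 := (hfibz k).hasSum
      rw [show (∑' n : Fin m → ℕ, a (Fin.snoc n k) * ∏ i, z' i ^ n i) = B k from rfl, this] at h4
      exact h4
    intro x
    have hx := ih (fun n => a (Fin.snoc n (x (Fin.last m)))) (hfib _)
      (fun z' hz' => hBzero z' hz' (x (Fin.last m))) (Fin.init x)
    rwa [Fin.snoc_init_self] at hx

/-- The equivalence `(Fin m → ℕ) × ℕ ≃ (Fin (m+1) → ℕ)` via `snoc`. -/
noncomputable def sibuyaEquiv' (m : ℕ) : (Fin m → ℕ) × ℕ ≃ (Fin (m + 1) → ℕ) where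
  toFun p := Fin.snoc p.1 p.2
  invFun x := (Fin.init x, x (Fin.last m))
  left_inv p := by simp [Fin.init_snoc, Fin.snoc_last]
  right_inv x := by simp [Fin.snoc_init_self]

set_option maxHeartbeats 1000000 in
/-- Consistency of the family `p_{n_1,…,n_k} = (∑_{i≤k} θ_i)^γ · π^{(k)}_{n_1,…,n_k}`,
where `π^{(k)}` is the multivariate Sibuya distribution with index `γ ∈ (0,1)` and weights
`q_i = θ_i / ∑_{j≤k} θ_j`, characterized by its generating function: for every nonzero
multi-index `(n_1,…,n_m)`, one has `p_{n_1,…,n_m} = ∑_{k=0}^∞ p_{n_1,…,n_m,k}`. -/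
theorem stmt18 (m : ℕ) (γ : ℝ) (hγ : γ ∈ Set.Ioo (0 : ℝ) 1)
    (θ : Fin (m + 1) → ℝ) (hθ : ∀ i, 0 < θ i)
    (πm : (Fin m → ℕ) → ℝ) (πm1 : (Fin (m + 1) → ℕ) → ℝ)
    (hπm : ∀ z : Fin m → ℝ, (∀ i, z i ∈ Set.Icc (0 : ℝ) 1) →
      HasSum (fun n : {n : Fin m → ℕ // n ≠ 0} => πm n.1 * ∏ i, z i ^ n.1 i)
        (1 - (∑ i, (1 - z i) * (θ i.castSucc / ∑ j : Fin m, θ j.castSucc)) ^ γ))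
    (hπm1 : ∀ z : Fin (m + 1) → ℝ, (∀ i, z i ∈ Set.Icc (0 : ℝ) 1) →
      HasSum (fun n : {n : Fin (m + 1) → ℕ // n ≠ 0} => πm1 n.1 * ∏ i, z i ^ n.1 i)
        (1 - (∑ i, (1 - z i) * (θ i / ∑ j, θ j)) ^ γ)) :
    ∀ n : Fin m → ℕ, n ≠ 0 →
      HasSum (fun k : ℕ => (∑ j, θ j) ^ γ * πm1 (Fin.snoc n k))
        ((∑ j : Fin m, θ j.castSucc) ^ γ * πm n) := by
  intro n hn
  rcases Nat.eq_zero_or_pos m with hm | hm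
  · subst hm
    exact absurd (funext fun i => i.elim0) hn
  have : NeZero m := ⟨hm.ne'⟩
  set S1 : ℝ := ∑ j, θ j with hS1def
  set Sm : ℝ := ∑ j : Fin m, θ j.castSucc with hSmdef
  have hS1 : 0 < S1 := Finset.sum_pos (fun i _ => hθ i) Finset.univ_nonempty
  have hSm : 0 < Sm := Finset.sum_pos (fun i _ => hθ _) Finset.univ_nonempty
  have hγ0 : (0:ℝ) < γ := hγ.1
  set F1 : (Fin (m+1) → ℕ) → ℝ := fun x => if x = 0 then 0 else πm1 x with hF1def
  set F0 : (Fin m → ℕ) → ℝ := fun x => if x = 0 then 0 else πm x with hF0def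
  -- conversion to full-lattice sums
  have conv1 : ∀ z : Fin (m+1) → ℝ, (∀ i, z i ∈ Set.Icc (0:ℝ) 1) →
      HasSum (fun x => F1 x * ∏ i, z i ^ x i)
        (1 - (∑ i, (1 - z i) * (θ i / S1)) ^ γ) := by
    intro z hz
    refine (hasSum_subtype_iff_of_support_subset (s := {x | x ≠ 0}) ?_).1 ?_
    · intro x hx
      simp only [Function.mem_support, ne_eq] at hx
      intro hx0
      apply hx
      simp [hF1def, hx0]
    · have heq : (fun x : {x : Fin (m+1) → ℕ // x ≠ 0} => F1 x.1 * ∏ i, z i ^ x.1 i)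
          = fun x : {x : Fin (m+1) → ℕ // x ≠ 0} => πm1 x.1 * ∏ i, z i ^ x.1 i := by
        funext x
        simp [hF1def, x.2]
      simp only [Function.comp_def]
      show HasSum (fun x : {x : Fin (m+1) → ℕ // x ≠ 0} => F1 x.1 * ∏ i, z i ^ x.1 i) _
      rw [heq]
      exact hπm1 z hz
  have conv0 : ∀ z : Fin m → ℝ, (∀ i, z i ∈ Set.Icc (0:ℝ) 1) →
      HasSum (fun x => F0 x * ∏ i, z i ^ x i)
        (1 - (∑ i, (1 - z i) * (θ i.castSucc / Sm)) ^ γ) := by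
    intro z hz
    refine (hasSum_subtype_iff_of_support_subset (s := {x | x ≠ 0}) ?_).1 ?_
    · intro x hx
      simp only [Function.mem_support, ne_eq] at hx
      intro hx0
      apply hx
      simp [hF0def, hx0]
    · have heq : (fun x : {x : Fin m → ℕ // x ≠ 0} => F0 x.1 * ∏ i, z i ^ x.1 i)
          = fun x : {x : Fin m → ℕ // x ≠ 0} => πm x.1 * ∏ i, z i ^ x.1 i := by
        funext x
        simp [hF0def, x.2]
      simp only [Function.comp_def]
      show HasSum (fun x : {x : Fin m → ℕ // x ≠ 0} => F0 x.1 * ∏ i, z i ^ x.1 i) _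
      rw [heq]
      exact hπm z hz
  -- summability of F1 and F0 (evaluate at z = 1)
  have hF1sum : Summable F1 := by
    have h1 := conv1 (fun _ => 1) (fun i => ⟨zero_le_one, le_refl 1⟩)
    have : HasSum F1 (1 - (0:ℝ) ^ γ) := by
      simpa [Real.zero_rpow hγ0.ne'] using h1
    exact this.summable
  have hF0sum : Summable F0 := by
    have h1 := conv0 (fun _ => 1) (fun i => ⟨zero_le_one, le_refl 1⟩)
    have : HasSum F0 (1 - (0:ℝ) ^ γ) := by
      simpa [Real.zero_rpow hγ0.ne'] using h1
    exact this.summable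
  -- fiber machinery for F1 grouped by initial segment
  have haE : Summable fun p : (Fin m → ℕ) × ℕ => F1 (Fin.snoc p.1 p.2) := by
    have := ((sibuyaEquiv' m).summable_iff (f := F1)).2 hF1sum
    simpa [Function.comp_def, sibuyaEquiv'] using this
  have habsE : Summable fun p : (Fin m → ℕ) × ℕ => |F1 (Fin.snoc p.1 p.2)| := haE.abs
  have hinj : ∀ nn : Fin m → ℕ,
      Function.Injective (fun k : ℕ => ((nn, k) : (Fin m → ℕ) × ℕ)) := by
    intro nn x y hxy
    simpa using congrArg Prod.snd hxy
  have hfib : ∀ nn, Summable fun k => F1 (Fin.snoc nn k) := by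
    intro nn
    have := haE.comp_injective (hinj nn)
    simpa [Function.comp_def] using this
  have hfibAbs : ∀ nn, Summable fun k => |F1 (Fin.snoc nn k)| := by
    intro nn
    have := habsE.comp_injective (hinj nn)
    simpa [Function.comp_def] using this
  have hCsum : Summable fun nn : Fin m → ℕ => ∑' k, |F1 (Fin.snoc nn k)| :=
    ⟨_, HasSum.prod_fiberwise habsE.hasSum fun nn => (hfibAbs nn).hasSum⟩
  have hcsum : Summable fun nn : Fin m → ℕ => ∑' k, F1 (Fin.snoc nn k) := by
    refine Summable.of_norm_bounded hCsum fun nn => ?_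
    rw [Real.norm_eq_abs]
    have h1 : Summable fun k => ‖F1 (Fin.snoc nn k)‖ := by
      simpa only [Real.norm_eq_abs] using hfibAbs nn
    have h2 := norm_tsum_le_tsum_norm h1
    simpa only [Real.norm_eq_abs] using h2
  set T : (Fin m → ℝ) → ℝ := fun z' => ∑ i : Fin m, (1 - z' i) * θ i.castSucc with hTdef
  set E : (Fin m → ℕ) → ℝ := fun nn =>
    (S1 ^ γ * (∑' k, F1 (Fin.snoc nn k)) - Sm ^ γ * F0 nn) - (if nn = 0 then S1 ^ γ - Sm ^ γ else 0) with hEdef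
  have main : ∀ z' : Fin m → ℝ, (∀ i, z' i ∈ Set.Icc (0:ℝ) 1) →
      HasSum (fun nn : Fin m → ℕ => E nn * ∏ i, z' i ^ nn i) 0 := by
    intro z' hz'
    have hT0 : 0 ≤ T z' :=
      Finset.sum_nonneg fun i _ => mul_nonneg (by linarith [(hz' i).2]) (hθ _).le
    have hzfull : ∀ i, (Fin.snoc z' 1 : Fin (m+1) → ℝ) i ∈ Set.Icc (0:ℝ) 1 := by
      intro i
      induction i using Fin.lastCases with
      | last => simp only [Fin.snoc_last]; exact ⟨zero_le_one, le_refl 1⟩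
      | cast j => simp only [Fin.snoc_castSucc]; exact hz' j
    have hA0 := conv1 (Fin.snoc z' 1) hzfull
    have hsumeq : (∑ i : Fin (m+1), (1 - (Fin.snoc z' 1 : Fin (m+1) → ℝ) i) * (θ i / S1))
        = T z' / S1 := by
      rw [Fin.sum_univ_castSucc]
      simp only [Fin.snoc_castSucc, Fin.snoc_last, sub_self, zero_mul, add_zero]
      rw [hTdef]
      rw [Finset.sum_div]
      exact Finset.sum_congr rfl fun i _ => by rw [mul_div_assoc]
    rw [hsumeq] at hA0
    have hA1 : HasSum (fun p : (Fin m → ℕ) × ℕ =>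
        F1 (Fin.snoc p.1 p.2) *
          ∏ i, (Fin.snoc z' 1 : Fin (m+1) → ℝ) i ^ (Fin.snoc p.1 p.2 : Fin (m+1) → ℕ) i)
        (1 - (T z' / S1) ^ γ) := by
      have h1' := ((sibuyaEquiv' m).hasSum_iff
        (f := fun x => F1 x * ∏ i, (Fin.snoc z' 1 : Fin (m+1) → ℝ) i ^ x i)).2 hA0
      simp only [Function.comp_def, sibuyaEquiv', Equiv.coe_fn_mk] at h1'
      exact h1'
    have hEq : (fun p : (Fin m → ℕ) × ℕ =>
        F1 (Fin.snoc p.1 p.2) *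
          ∏ i, (Fin.snoc z' 1 : Fin (m+1) → ℝ) i ^ (Fin.snoc p.1 p.2 : Fin (m+1) → ℕ) i)
        = fun p : (Fin m → ℕ) × ℕ =>
          F1 (Fin.snoc p.1 p.2) * ∏ i, z' i ^ p.1 i := by
      funext p
      rw [Fin.prod_univ_castSucc]
      simp only [Fin.snoc_castSucc, Fin.snoc_last, one_pow, mul_one]
    rw [hEq] at hA1
    have hA : HasSum (fun nn : Fin m → ℕ => (∑' k, F1 (Fin.snoc nn k)) * ∏ i, z' i ^ nn i) (1 - (T z' / S1) ^ γ) := by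
      refine hA1.prod_fiberwise fun nn => ?_
      exact (hfib nn).hasSum.mul_right _
    have hB := conv0 z' hz'
    have hsumeq0 : (∑ i : Fin m, (1 - z' i) * (θ i.castSucc / Sm)) = T z' / Sm := by
      rw [hTdef, Finset.sum_div]
      exact Finset.sum_congr rfl fun i _ => by rw [mul_div_assoc]
    rw [hsumeq0] at hB
    have hA' := hA.mul_left (S1 ^ γ)
    have hB' := hB.mul_left (Sm ^ γ)
    have hsub := hA'.sub hB'
    have hval : S1 ^ γ * (1 - (T z' / S1) ^ γ) - Sm ^ γ * (1 - (T z' / Sm) ^ γ)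
        = S1 ^ γ - Sm ^ γ := by
      rw [Real.div_rpow hT0 hS1.le, Real.div_rpow hT0 hSm.le, mul_sub, mul_sub,
        mul_div_cancel₀ _ (Real.rpow_pos_of_pos hS1 γ).ne',
        mul_div_cancel₀ _ (Real.rpow_pos_of_pos hSm γ).ne']
      ring
    rw [hval] at hsub
    have hpt : HasSum (fun nn : Fin m → ℕ =>
        (if nn = 0 then S1 ^ γ - Sm ^ γ else 0) * ∏ i, z' i ^ nn i) (S1 ^ γ - Sm ^ γ) := by
      have h0 := hasSum_ite_eq (0 : Fin m → ℕ) (S1 ^ γ - Sm ^ γ)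
      have heqp : (fun nn : Fin m → ℕ =>
          (if nn = 0 then S1 ^ γ - Sm ^ γ else 0) * ∏ i, z' i ^ nn i)
          = fun nn : Fin m → ℕ => if nn = 0 then S1 ^ γ - Sm ^ γ else 0 := by
        funext nn
        by_cases hnn : nn = 0
        · subst hnn; simp
        · simp [hnn]
      rw [heqp]
      exact h0
    have hfin := hsub.sub hpt
    have hEq2 : (fun nn : Fin m → ℕ =>
        (S1 ^ γ * ((∑' k, F1 (Fin.snoc nn k)) * ∏ i, z' i ^ nn i) - Sm ^ γ * (F0 nn * ∏ i, z' i ^ nn i))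
          - (if nn = 0 then S1 ^ γ - Sm ^ γ else 0) * ∏ i, z' i ^ nn i)
        = fun nn : Fin m → ℕ => E nn * ∏ i, z' i ^ nn i := by
      funext nn
      rw [hEdef]
      ring
    rw [sub_self] at hfin
    rw [hEq2] at hfin
    exact hfin
  have hEsum : Summable E := by
    refine Summable.sub (Summable.sub (hcsum.mul_left _) (hF0sum.mul_left _)) ?_
    exact (hasSum_ite_eq (0 : Fin m → ℕ) (S1 ^ γ - Sm ^ γ)).summable
  have hEzero := sibuya_aux_multi m E hEsum main
  have hEn := hEzero n
  simp only [hEdef] at hEn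
  rw [if_neg hn] at hEn
  have hkey : S1 ^ γ * (∑' k, F1 (Fin.snoc n k)) = Sm ^ γ * πm n := by
    have hF0n : F0 n = πm n := by simp [hF0def, hn]
    rw [hF0n] at hEn
    linarith
  have hsnoc : ∀ k : ℕ, (Fin.snoc n k : Fin (m+1) → ℕ) ≠ 0 := by
    intro k h0
    apply hn
    funext i
    have := congrFun h0 i.castSucc
    simpa [Fin.snoc_castSucc] using this
  have hfinal := (hfib n).hasSum.mul_left (S1 ^ γ)
  have hEq3 : (fun k => S1 ^ γ * F1 (Fin.snoc n k))
      = fun k => S1 ^ γ * πm1 (Fin.snoc n k) := by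
    funext k
    rw [hF1def]
    simp [hsnoc k]
  rw [hEq3] at hfinal
  rw [hkey] at hfinal
  exact hfinal
end
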